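/- Let L : L^p(Ω,E,ℙ) → F be a continuous linear map with 1 ≤ p < ∞. If p = 1 or F = ℝ, then for every A ∈ F the operator norm of the restriction L_A of L to L^p(A,E,ℙ) equals its p-semivariation norm: ‖L_A‖_{p,ℙ} = ⦀L_A⦀_{p,ℙ}. -/

import Mathlib

open MeasureTheory ENNReal Filter

noncomputable section

/-- The operator norm `‖L_A‖_{p,ℙ}` of the restriction of `L` to `L^p` functions
supported in `A`. -/
def opNormOn {Ω E F : Type*} [MeasurableSpace Ω] (P : Measure Ω) [IsFiniteMeasure P]
    [NormedAddCommGroup E] [NormedSpace ℝ E] [NormedAddCommGroup F] [NormedSpace ℝ F]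
    (p : ℝ≥0∞) [Fact (1 ≤ p)] (L : Lp E p P →L[ℝ] F) (A : Set Ω) : ℝ≥0∞ :=
  ⨆ (Y : Lp E p P) (_ : ‖Y‖ ≤ 1) (_ : ∀ᵐ ω ∂P, ω ∉ A → Y ω = 0), (‖L Y‖₊ : ℝ≥0∞)

/-- The `p`-semivariation norm `⦀L_A⦀_{p,ℙ}` of the restriction of `L` to `L^p`
functions supported in `A`. -/
def opSemiVarOn {Ω E F : Type*} [MeasurableSpace Ω] (P : Measure Ω) [IsFiniteMeasure P]
    [NormedAddCommGroup E] [NormedSpace ℝ E] [NormedAddCommGroup F] [NormedSpace ℝ F]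
    (p : ℝ≥0∞) [Fact (1 ≤ p)] (L : Lp E p P →L[ℝ] F) (A : Set Ω) : ℝ≥0∞ :=
  ⨆ (n : ℕ) (As : Fin n → Set Ω) (xs : Fin n → E) (hAs : ∀ i, MeasurableSet (As i))
    (_ : Pairwise (Function.onFun Disjoint As)) (_ : ∀ i, As i ⊆ A)
    (_ : eLpNorm (fun ω => ∑ i, (As i).indicator (fun _ => xs i) ω) p P ≤ 1),
    ∑ i, (‖L (indicatorConstLp p (hAs i) (measure_ne_top P (As i)) (xs i))‖₊ : ℝ≥0∞)

set_option linter.unusedSectionVars false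
set_option maxHeartbeats 1000000

namespace Stmt5Aux

variable {Ω E : Type*} [NormedAddCommGroup E]

lemma sum_ind_of_mem {n : ℕ} {As : Fin n → Set Ω} (hd : Pairwise (Function.onFun Disjoint As))
    (v : Fin n → E) {ω : Ω} {j : Fin n} (hj : ω ∈ As j) :
    (∑ i, (As i).indicator (fun _ => v i) ω) = v j := by
  rw [Finset.sum_eq_single j]
  · exact Set.indicator_of_mem hj _
  · intro i _ hij
    exact Set.indicator_of_notMem (fun h => Set.disjoint_left.mp (hd hij) h hj) _
  · exact fun h => absurd (Finset.mem_univ j) h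

lemma sum_ind_of_not_mem {n : ℕ} {As : Fin n → Set Ω}
    (v : Fin n → E) {ω : Ω} (hj : ∀ j, ω ∉ As j) :
    (∑ i, (As i).indicator (fun _ => v i) ω) = 0 :=
  Finset.sum_eq_zero fun i _ => Set.indicator_of_notMem (hj i) _

lemma norm_sum_ind_eq {F : Type*} [NormedAddCommGroup F] {n : ℕ} {As : Fin n → Set Ω}
    (hd : Pairwise (Function.onFun Disjoint As)) (v : Fin n → E) (w : Fin n → F)
    (hvw : ∀ i, ‖v i‖ = ‖w i‖) (ω : Ω) :
    ‖∑ i, (As i).indicator (fun _ => v i) ω‖ = ‖∑ i, (As i).indicator (fun _ => w i) ω‖ := by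
  by_cases h : ∃ j, ω ∈ As j
  · obtain ⟨j, hj⟩ := h
    rw [sum_ind_of_mem hd v hj, sum_ind_of_mem hd w hj, hvw]
  · push_neg at h
    rw [sum_ind_of_not_mem v h, sum_ind_of_not_mem w h, norm_zero, norm_zero]

lemma norm_sum_ind_add {n : ℕ} {As : Fin n → Set Ω}
    (hd : Pairwise (Function.onFun Disjoint As)) (v : Fin n → E) (ω : Ω) :
    ‖∑ i, (As i).indicator (fun _ => v i) ω‖ = ∑ i, ‖(As i).indicator (fun _ => v i) ω‖ := by
  by_cases h : ∃ j, ω ∈ As j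
  · obtain ⟨j, hj⟩ := h
    rw [sum_ind_of_mem hd v hj, Finset.sum_eq_single j]
    · rw [Set.indicator_of_mem hj]
    · intro i _ hij
      rw [Set.indicator_of_notMem (fun h => Set.disjoint_left.mp (hd hij) h hj), norm_zero]
    · exact fun h => absurd (Finset.mem_univ j) h
  · push_neg at h
    rw [sum_ind_of_not_mem v h, norm_zero]
    exact (Finset.sum_eq_zero fun i _ => by rw [Set.indicator_of_notMem (h i), norm_zero]).symm

variable [MeasurableSpace Ω] {P : Measure Ω} [IsFiniteMeasure P] {p : ℝ≥0∞} [Fact (1 ≤ p)]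

lemma coeFn_finset_sum {ι : Type*} (s : Finset ι) (f : ι → Lp E p P) :
    ⇑(∑ i ∈ s, f i) =ᵐ[P] fun ω => ∑ i ∈ s, f i ω := by
  classical
  induction s using Finset.induction_on with
  | empty => simp only [Finset.sum_empty]; exact Lp.coeFn_zero E p P
  | insert a s hx ih =>
    rw [Finset.sum_insert hx]
    filter_upwards [Lp.coeFn_add (f a) (∑ i ∈ s, f i), ih] with ω h1 h2
    rw [h1, Pi.add_apply, h2]
    simp [Finset.sum_insert hx]

lemma smul_indicatorConstLp [NormedSpace ℝ E] (c : ℝ) {s : Set Ω} (hs : MeasurableSet s)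
    (x : E) :
    indicatorConstLp p hs (measure_ne_top P s) (c • x)
      = c • indicatorConstLp p hs (measure_ne_top P s) x := by
  apply Lp.ext
  filter_upwards [indicatorConstLp_coeFn (p := p) (hs := hs) (hμs := measure_ne_top P s) (c := c • x),
    Lp.coeFn_smul c (indicatorConstLp p hs (measure_ne_top P s) x),
    indicatorConstLp_coeFn (p := p) (hs := hs) (hμs := measure_ne_top P s) (c := x)] with ω h1 h2 h3
  rw [h1, h2, Pi.smul_apply, h3, Set.indicator_const_smul]


variable [NormedSpace ℝ E] {F : Type*} [NormedAddCommGroup F] [NormedSpace ℝ F]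

lemma normL_sum_le (L : Lp E p P →L[ℝ] F) {A : Set Ω} {n : ℕ} (As : Fin n → Set Ω)
    (xs : Fin n → E) (hAs : ∀ i, MeasurableSet (As i)) (hd : Pairwise (Function.onFun Disjoint As))
    (hsub : ∀ i, As i ⊆ A) :
    (‖L (∑ i, indicatorConstLp p (hAs i) (measure_ne_top P (As i)) (xs i))‖₊ : ℝ≥0∞)
      ≤ eLpNorm (fun ω => ∑ i, (As i).indicator (fun _ => xs i) ω) p P
          * opSemiVarOn P p L A := by
  set q : Fin n → Lp E p P := fun i => indicatorConstLp p (hAs i) (measure_ne_top P (As i)) (xs i)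
    with hq
  set S : Lp E p P := ∑ i, q i with hS
  have hco : ⇑S =ᵐ[P] (fun ω => ∑ i, (As i).indicator (fun _ => xs i) ω) := by
    have h2 : ∀ᵐ ω ∂P, ∀ i : Fin n, (q i : Lp E p P) ω = (As i).indicator (fun _ => xs i) ω :=
      ae_all_iff.2 fun i => indicatorConstLp_coeFn
    filter_upwards [coeFn_finset_sum Finset.univ q, h2] with ω h1 h2
    rw [hS, h1]
    exact Finset.sum_congr rfl fun i _ => h2 i
  have hc_eq : eLpNorm (fun ω => ∑ i, (As i).indicator (fun _ => xs i) ω) p P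
      = (‖S‖₊ : ℝ≥0∞) := by
    rw [← eLpNorm_congr_ae hco, Lp.nnnorm_def, ENNReal.coe_toNNReal (Lp.eLpNorm_ne_top S)]
  by_cases h0 : ‖S‖₊ = 0
  · have : S = 0 := by rwa [nnnorm_eq_zero] at h0
    simp [this]
  have key : (↑(‖S‖₊⁻¹) : ℝ≥0∞) * ∑ i, (‖L (q i)‖₊ : ℝ≥0∞) ≤ opSemiVarOn P p L A := by
    have hxs' : ∀ i, indicatorConstLp p (hAs i) (measure_ne_top P (As i)) (‖S‖⁻¹ • xs i)
        = ‖S‖⁻¹ • q i := fun i => smul_indicatorConstLp ‖S‖⁻¹ (hAs i) (xs i)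
    have hpt : (fun ω => ∑ i, (As i).indicator (fun _ => ‖S‖⁻¹ • xs i) ω)
        = ‖S‖⁻¹ • (fun ω => ∑ i, (As i).indicator (fun _ => xs i) ω) := by
      funext ω
      simp only [Pi.smul_apply, Finset.smul_sum]
      exact Finset.sum_congr rfl fun i _ => by
        simp only [Set.indicator]; split <;> simp
    have hcoe : (‖(‖S‖⁻¹ : ℝ)‖₊ : ℝ≥0∞) = (↑(‖S‖₊⁻¹) : ℝ≥0∞) := by
      rw [nnnorm_inv, nnnorm_norm]
    have hnorm : eLpNorm (fun ω => ∑ i, (As i).indicator (fun _ => ‖S‖⁻¹ • xs i) ω) p P ≤ 1 := by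
      rw [hpt, eLpNorm_const_smul, hc_eq, enorm_eq_nnnorm, hcoe, ← ENNReal.coe_mul, inv_mul_cancel₀ h0,
        ENNReal.coe_one]
    have hval : (↑(‖S‖₊⁻¹) : ℝ≥0∞) * ∑ i, (‖L (q i)‖₊ : ℝ≥0∞)
        = ∑ i, (‖L (indicatorConstLp p (hAs i) (measure_ne_top P (As i)) (‖S‖⁻¹ • xs i))‖₊ : ℝ≥0∞) := by
      rw [Finset.mul_sum]
      refine Finset.sum_congr rfl fun i _ => ?_
      rw [hxs' i, L.map_smul, nnnorm_smul, ENNReal.coe_mul, hcoe]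
    rw [hval]
    unfold opSemiVarOn
    exact le_iSup_of_le n (le_iSup_of_le As (le_iSup_of_le (fun i => ‖S‖⁻¹ • xs i)
      (le_iSup_of_le hAs (le_iSup_of_le hd (le_iSup_of_le hsub
        (le_iSup_of_le hnorm le_rfl))))))
  have hSle : (‖L S‖₊ : ℝ≥0∞) ≤ ∑ i, (‖L (q i)‖₊ : ℝ≥0∞) := by
    rw [hS, map_sum, ← ENNReal.coe_finset_sum]
    exact ENNReal.coe_le_coe.2 (nnnorm_sum_le _ _)
  calc (‖L S‖₊ : ℝ≥0∞) ≤ ∑ i, (‖L (q i)‖₊ : ℝ≥0∞) := hSle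
    _ = (‖S‖₊ : ℝ≥0∞) * ((↑(‖S‖₊⁻¹) : ℝ≥0∞) * ∑ i, (‖L (q i)‖₊ : ℝ≥0∞)) := by
        rw [← mul_assoc, ← ENNReal.coe_mul, mul_inv_cancel₀ h0, ENNReal.coe_one, one_mul]
    _ ≤ (‖S‖₊ : ℝ≥0∞) * opSemiVarOn P p L A := mul_le_mul_right key _
    _ = eLpNorm (fun ω => ∑ i, (As i).indicator (fun _ => xs i) ω) p P * opSemiVarOn P p L A := by
        rw [hc_eq]


lemma normL_le_opNormOn (L : Lp E p P →L[ℝ] F) {A : Set Ω} (Y : Lp E p P)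
    (hY : ∀ᵐ ω ∂P, ω ∉ A → Y ω = 0) :
    (‖L Y‖₊ : ℝ≥0∞) ≤ opNormOn P p L A * (‖Y‖₊ : ℝ≥0∞) := by
  by_cases h0 : ‖Y‖₊ = 0
  · have : Y = 0 := nnnorm_eq_zero.mp h0
    simp [this]
  have hn0 : ‖Y‖ ≠ 0 := fun h => h0 (by simpa [nnnorm_eq_zero] using norm_eq_zero.mp h)
  have hY1 : ‖(‖Y‖⁻¹ : ℝ) • Y‖ ≤ 1 := by
    rw [norm_smul, norm_inv, norm_norm, inv_mul_cancel₀ hn0]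
  have hY2 : ∀ᵐ ω ∂P, ω ∉ A → ((‖Y‖⁻¹ : ℝ) • Y) ω = 0 := by
    filter_upwards [hY, Lp.coeFn_smul (‖Y‖⁻¹ : ℝ) Y] with ω h1 h2 h3
    rw [h2, Pi.smul_apply, h1 h3, smul_zero]
  have hle : (‖L ((‖Y‖⁻¹ : ℝ) • Y)‖₊ : ℝ≥0∞) ≤ opNormOn P p L A := by
    unfold opNormOn
    exact le_iSup_of_le ((‖Y‖⁻¹ : ℝ) • Y) (le_iSup_of_le hY1 (le_iSup_of_le hY2 le_rfl))
  have hval : (‖L ((‖Y‖⁻¹ : ℝ) • Y)‖₊ : ℝ≥0∞) = (↑(‖Y‖₊⁻¹) : ℝ≥0∞) * (‖L Y‖₊ : ℝ≥0∞) := by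
    rw [L.map_smul, nnnorm_smul, ENNReal.coe_mul, nnnorm_inv, nnnorm_norm]
  calc (‖L Y‖₊ : ℝ≥0∞)
      = (‖Y‖₊ : ℝ≥0∞) * ((↑(‖Y‖₊⁻¹) : ℝ≥0∞) * (‖L Y‖₊ : ℝ≥0∞)) := by
        rw [← mul_assoc, ← ENNReal.coe_mul, mul_inv_cancel₀ h0, ENNReal.coe_one, one_mul]
    _ ≤ (‖Y‖₊ : ℝ≥0∞) * opNormOn P p L A := by
        rw [← hval]; exact mul_le_mul_right hle _
    _ = opNormOn P p L A * (‖Y‖₊ : ℝ≥0∞) := mul_comm _ _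

lemma simpleFunc_bound (L : Lp E p P →L[ℝ] F) {A : Set Ω} (g : SimpleFunc Ω E)
    (hg : MemLp g p P) (hsupp : ∀ ω, ω ∉ A → g ω = 0) :
    (‖L (hg.toLp g)‖₊ : ℝ≥0∞) ≤ eLpNorm g p P * opSemiVarOn P p L A := by
  classical
  set s : Finset E := g.range \ {0} with hs
  set n := s.card with hn
  set val : Fin n → E := fun i => ((s.equivFin.symm i : s) : E) with hvaldef
  have hval_mem : ∀ i, val i ∈ s := fun i => (s.equivFin.symm i).2
  have hval_ne : ∀ i, val i ≠ 0 := fun i => by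
    have := hval_mem i
    rw [hs, Finset.mem_sdiff, Finset.mem_singleton] at this
    exact this.2
  have hval_inj : Function.Injective val := fun i j h =>
    s.equivFin.symm.injective (Subtype.ext h)
  set As : Fin n → Set Ω := fun i => g ⁻¹' {val i} with hAsdef
  have hAs : ∀ i, MeasurableSet (As i) := fun i => g.measurableSet_fiber (val i)
  have hmemAs : ∀ {i ω}, ω ∈ As i ↔ g ω = val i := fun {i ω} => Iff.rfl
  have hd : Pairwise (Function.onFun Disjoint As) := fun i j hij => Set.disjoint_left.2
    fun ω h1 h2 => hij (hval_inj ((hmemAs.mp h1).symm.trans (hmemAs.mp h2)))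
  have hsub : ∀ i, As i ⊆ A := by
    intro i ω h
    by_contra hω
    exact hval_ne i ((hmemAs.mp h).symm.trans (hsupp ω hω))
  have hptw : ∀ ω, g ω = ∑ i, (As i).indicator (fun _ => val i) ω := by
    intro ω
    by_cases h : g ω = 0
    · rw [h, sum_ind_of_not_mem]
      intro j hj
      exact hval_ne j ((hmemAs.mp hj).symm.trans h)
    · have hmem : g ω ∈ s := by
        rw [hs, Finset.mem_sdiff, Finset.mem_singleton]
        exact ⟨g.mem_range_self ω, h⟩
      set j := s.equivFin ⟨g ω, hmem⟩ with hj
      have hval_j : val j = g ω := by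
        rw [hvaldef]; simp [hj]
      have hωj : ω ∈ As j := hmemAs.mpr hval_j.symm
      rw [sum_ind_of_mem hd val hωj, hval_j]
  have hLp_eq : hg.toLp g = ∑ i, indicatorConstLp p (hAs i) (measure_ne_top P (As i)) (val i) := by
    apply Lp.ext
    have h2 : ∀ᵐ ω ∂P, ∀ i : Fin n,
        (indicatorConstLp p (hAs i) (measure_ne_top P (As i)) (val i) : Lp E p P) ω
          = (As i).indicator (fun _ => val i) ω :=
      ae_all_iff.2 fun i => indicatorConstLp_coeFn
    filter_upwards [hg.coeFn_toLp,
      coeFn_finset_sum Finset.univ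
        (fun i => indicatorConstLp p (hAs i) (measure_ne_top P (As i)) (val i)), h2]
      with ω h1 h3 h4
    rw [h1, h3, hptw ω]
    exact Finset.sum_congr rfl fun i _ => (h4 i).symm
  rw [hLp_eq]
  calc (‖L (∑ i, indicatorConstLp p (hAs i) (measure_ne_top P (As i)) (val i))‖₊ : ℝ≥0∞)
      ≤ eLpNorm (fun ω => ∑ i, (As i).indicator (fun _ => val i) ω) p P
          * opSemiVarOn P p L A := normL_sum_le L As val hAs hd hsub
    _ = eLpNorm g p P * opSemiVarOn P p L A := by
        rw [show (fun ω => ∑ i, (As i).indicator (fun _ => val i) ω) = ⇑g from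
          funext fun ω => (hptw ω).symm]

lemma normL_le_semiVar (hp' : p ≠ ∞) (L : Lp E p P →L[ℝ] F) {A : Set Ω}
    (hA : MeasurableSet A) (Y : Lp E p P) (hY1 : ‖Y‖ ≤ 1)
    (hY2 : ∀ᵐ ω ∂P, ω ∉ A → Y ω = 0) :
    (‖L Y‖₊ : ℝ≥0∞) ≤ opSemiVarOn P p L A := by
  set M := opSemiVarOn P p L A with hM
  by_cases hMtop : M = ∞
  · rw [hMtop]; exact le_top
  have hMR : (0:ℝ) ≤ M.toReal := ENNReal.toReal_nonneg
  have hYnorm : eLpNorm (⇑Y) p P ≤ 1 := by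
    rw [← ENNReal.coe_toNNReal (Lp.eLpNorm_ne_top Y), ← Lp.nnnorm_def]
    exact_mod_cast (by rwa [← Lp.coe_nnnorm Y] at hY1 : (‖Y‖₊ : ℝ) ≤ 1)
  have key : ∀ ε : ℝ, 0 < ε → ‖L Y‖ ≤ ‖L‖ * ε + (1 + ε) * M.toReal := by
    intro ε hε
    obtain ⟨g, hgY, hgmem⟩ := (Lp.memLp Y).exists_simpleFunc_eLpNorm_sub_lt hp'
      (ne_of_gt (ENNReal.ofReal_pos.2 hε))
    set g' : SimpleFunc Ω E := g.restrict A with hg'def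
    have hg'_eq : ⇑g' = A.indicator ⇑g := g.coe_restrict hA
    have hg'mem : MemLp (⇑g') p P := by
      rw [hg'_eq]; exact hgmem.indicator hA
    have hsupp : ∀ ω, ω ∉ A → g' ω = 0 := fun ω h => by
      rw [show g' ω = A.indicator (⇑g) ω from congrFun hg'_eq ω, Set.indicator_of_notMem h]
    have hdiff : eLpNorm (⇑Y - ⇑g') p P < ENNReal.ofReal ε := by
      have heq : (⇑Y - ⇑g') =ᵐ[P] A.indicator (⇑Y - ⇑g) := by
        filter_upwards [hY2] with ω h1
        by_cases hω : ω ∈ A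
        · simp [Set.indicator_of_mem hω, Pi.sub_apply,
            show g' ω = A.indicator (⇑g) ω from congrFun hg'_eq ω]
        · simp [Set.indicator_of_notMem hω, Pi.sub_apply, h1 hω, hsupp ω hω]
      calc eLpNorm (⇑Y - ⇑g') p P = eLpNorm (A.indicator (⇑Y - ⇑g)) p P :=
            eLpNorm_congr_ae heq
        _ ≤ eLpNorm (⇑Y - ⇑g) p P := eLpNorm_indicator_le _
        _ < ENNReal.ofReal ε := hgY
    set G : Lp E p P := hg'mem.toLp g' with hGdef
    have hGco : ⇑(Y - G) =ᵐ[P] (⇑Y - ⇑g') := by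
      filter_upwards [Lp.coeFn_sub Y G, hg'mem.coeFn_toLp] with ω h1 h2
      rw [h1, Pi.sub_apply, Pi.sub_apply, h2]
    have hYG : ‖Y - G‖ ≤ ε := by
      rw [Lp.norm_def, eLpNorm_congr_ae hGco]
      calc (eLpNorm (⇑Y - ⇑g') p P).toReal ≤ (ENNReal.ofReal ε).toReal :=
            ENNReal.toReal_mono ENNReal.ofReal_ne_top hdiff.le
        _ = ε := ENNReal.toReal_ofReal hε.le
    have hg'norm : eLpNorm (⇑g') p P ≤ 1 + ENNReal.ofReal ε := by
      have : ⇑g' = ⇑Y - (⇑Y - ⇑g') := by funext ω; simp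
      rw [this]
      calc eLpNorm (⇑Y - (⇑Y - ⇑g')) p P
          ≤ eLpNorm (⇑Y) p P + eLpNorm (⇑Y - ⇑g') p P := by
            refine eLpNorm_sub_le ?_ ?_ (Fact.out : 1 ≤ p)
            · exact Lp.aestronglyMeasurable Y
            · exact (Lp.aestronglyMeasurable Y).sub hg'mem.aestronglyMeasurable
        _ ≤ 1 + ENNReal.ofReal ε := add_le_add hYnorm hdiff.le
    have hG_bound : ‖L G‖ ≤ (1 + ε) * M.toReal := by
      have h1 : (‖L G‖₊ : ℝ≥0∞) ≤ eLpNorm (⇑g') p P * M := simpleFunc_bound L g' hg'mem hsupp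
      have h2 : (‖L G‖₊ : ℝ≥0∞) ≤ (1 + ENNReal.ofReal ε) * M :=
        h1.trans (mul_le_mul_left hg'norm M)
      have h3 : ((1 + ENNReal.ofReal ε) * M).toReal = (1 + ε) * M.toReal := by
        rw [ENNReal.toReal_mul, ENNReal.toReal_add one_ne_top ENNReal.ofReal_ne_top,
          ENNReal.toReal_one, ENNReal.toReal_ofReal hε.le]
      calc ‖L G‖ = ((‖L G‖₊ : ℝ≥0∞)).toReal := by simp
        _ ≤ ((1 + ENNReal.ofReal ε) * M).toReal :=
            ENNReal.toReal_mono (ENNReal.mul_ne_top (by finiteness) hMtop) h2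
        _ = (1 + ε) * M.toReal := h3
    calc ‖L Y‖ = ‖L (Y - G) + L G‖ := by rw [← map_add, sub_add_cancel]
      _ ≤ ‖L (Y - G)‖ + ‖L G‖ := norm_add_le _ _
      _ ≤ ‖L‖ * ε + (1 + ε) * M.toReal := by
          refine add_le_add ?_ hG_bound
          calc ‖L (Y - G)‖ ≤ ‖L‖ * ‖Y - G‖ := L.le_opNorm _
            _ ≤ ‖L‖ * ε := by
                exact mul_le_mul_of_nonneg_left hYG (norm_nonneg L)
  have hfinal : ‖L Y‖ ≤ M.toReal := by
    refine le_of_forall_pos_le_add fun δ hδ => ?_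
    set C : ℝ := ‖L‖ + M.toReal with hC
    have hC0 : 0 < C + 1 := by positivity
    have hε : 0 < δ / (C + 1) := div_pos hδ hC0
    calc ‖L Y‖ ≤ ‖L‖ * (δ / (C + 1)) + (1 + δ / (C + 1)) * M.toReal := key _ hε
      _ = M.toReal + (δ / (C + 1)) * C := by ring
      _ ≤ M.toReal + (δ / (C + 1)) * (C + 1) := by
          have h := mul_le_mul_of_nonneg_left (show C ≤ C + 1 by linarith) hε.le
          linarith
      _ = M.toReal + δ := by
          rw [div_mul_cancel₀ _ (ne_of_gt hC0)]
  calc (‖L Y‖₊ : ℝ≥0∞) = ENNReal.ofReal ‖L Y‖ := (ofReal_norm _).symm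
    _ ≤ ENNReal.ofReal M.toReal := ENNReal.ofReal_le_ofReal hfinal
    _ = M := ENNReal.ofReal_toReal hMtop

end Stmt5Aux

/-- If `p = 1` or `F = ℝ` (as a normed space), then the operator norm of the restriction
of `L` to functions supported in `A` equals its `p`-semivariation norm. -/
theorem stmt5 {Ω E F : Type*} [MeasurableSpace Ω] (P : Measure Ω) [IsProbabilityMeasure P]
    [NormedAddCommGroup E] [NormedSpace ℝ E] [NormedAddCommGroup F] [NormedSpace ℝ F]
    (p : ℝ≥0∞) [Fact (1 ≤ p)] (hp' : p ≠ ∞)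
    (L : Lp E p P →L[ℝ] F)
    (hcase : p = 1 ∨ Nonempty (F ≃ₗᵢ[ℝ] ℝ))
    (A : Set Ω) (hA : MeasurableSet A) :
    opNormOn P p L A = opSemiVarOn P p L A := by

  apply le_antisymm
  · unfold opNormOn
    exact iSup_le fun Y => iSup_le fun h1 => iSup_le fun h2 =>
      Stmt5Aux.normL_le_semiVar hp' L hA Y h1 h2
  · unfold opSemiVarOn
    refine iSup_le fun n => iSup_le fun As => iSup_le fun xs => iSup_le fun hAs =>
      iSup_le fun hd => iSup_le fun hsub => iSup_le fun hnorm => ?_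
    set q : Fin n → Lp E p P :=
      fun i => indicatorConstLp p (hAs i) (measure_ne_top P (As i)) (xs i) with hq
    have hsuppq : ∀ i, ∀ᵐ ω ∂P, ω ∉ A → (q i : Lp E p P) ω = 0 := by
      intro i
      filter_upwards [indicatorConstLp_coeFn (p := p) (hs := hAs i)
        (hμs := measure_ne_top P (As i)) (c := xs i)] with ω h1 h2
      simp only [hq]
      rw [h1, Set.indicator_of_notMem (fun hh => h2 (hsub i hh))]
    rcases hcase with hp1 | he
    · subst hp1
      have hD : ∀ i, (‖L (q i)‖₊ : ℝ≥0∞) ≤ opNormOn P 1 L A * (‖q i‖₊ : ℝ≥0∞) :=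
        fun i => Stmt5Aux.normL_le_opNormOn L (q i) (hsuppq i)
      have hsum : ∑ i, ((‖q i‖₊ : ℝ≥0∞)) ≤ 1 := by
        have h1 : ∀ i, ((‖q i‖₊ : ℝ≥0∞))
            = eLpNorm ((As i).indicator (fun _ => xs i)) 1 P := by
          intro i
          rw [Lp.nnnorm_def, ENNReal.coe_toNNReal (Lp.eLpNorm_ne_top _),
            eLpNorm_congr_ae indicatorConstLp_coeFn]
        calc ∑ i, ((‖q i‖₊ : ℝ≥0∞))
            = ∑ i, ∫⁻ ω, (‖(As i).indicator (fun _ => xs i) ω‖₊ : ℝ≥0∞) ∂P := by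
              refine Finset.sum_congr rfl fun i _ => ?_
              rw [h1 i, eLpNorm_one_eq_lintegral_enorm]; rfl
          _ = ∫⁻ ω, ∑ i, (‖(As i).indicator (fun _ => xs i) ω‖₊ : ℝ≥0∞) ∂P := by
              rw [lintegral_finset_sum]
              intro i _
              have hmeas : (fun ω => (‖(As i).indicator (fun _ => xs i) ω‖₊ : ℝ≥0∞))
                  = (As i).indicator (fun _ => (‖xs i‖₊ : ℝ≥0∞)) := by
                funext ω; by_cases h : ω ∈ As i <;> simp [Set.indicator, h]
              rw [hmeas]
              exact Measurable.indicator measurable_const (hAs i)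
          _ = ∫⁻ ω, (‖∑ i, (As i).indicator (fun _ => xs i) ω‖₊ : ℝ≥0∞) ∂P := by
              refine lintegral_congr fun ω => ?_
              simp only [← ofReal_norm, ← enorm_eq_nnnorm]
              rw [Stmt5Aux.norm_sum_ind_add hd xs ω,
                ENNReal.ofReal_sum_of_nonneg (fun i _ => norm_nonneg _)]
          _ = eLpNorm (fun ω => ∑ i, (As i).indicator (fun _ => xs i) ω) 1 P :=
              by rw [eLpNorm_one_eq_lintegral_enorm]; rfl
          _ ≤ 1 := hnorm
      calc ∑ i, (‖L (q i)‖₊ : ℝ≥0∞) ≤ ∑ i, opNormOn P 1 L A * (‖q i‖₊ : ℝ≥0∞) :=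
            Finset.sum_le_sum fun i _ => hD i
        _ = opNormOn P 1 L A * ∑ i, ((‖q i‖₊ : ℝ≥0∞)) := by rw [Finset.mul_sum]
        _ ≤ opNormOn P 1 L A * 1 := mul_le_mul_right hsum _
        _ = opNormOn P 1 L A := mul_one _
    · obtain ⟨e⟩ := he
      set σ : Fin n → ℝ := fun i => if 0 ≤ e (L (q i)) then 1 else -1 with hσdef
      have hσabs : ∀ i, ‖σ i‖ = 1 := by
        intro i; rw [hσdef]; dsimp only; split <;> simp
      have hσval : ∀ i, σ i * e (L (q i)) = ‖L (q i)‖ := by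
        intro i
        rw [← e.norm_map (L (q i)), Real.norm_eq_abs, hσdef]
        dsimp only
        split
        · rw [one_mul, abs_of_nonneg ‹_›]
        · rw [neg_one_mul, abs_of_neg (lt_of_not_ge ‹_›)]
      set Y : Lp E p P := ∑ i, σ i • q i with hY
      have hYco : ⇑Y =ᵐ[P] fun ω => ∑ i, (As i).indicator (fun _ => σ i • xs i) ω := by
        have h2 : ∀ᵐ ω ∂P, ∀ i : Fin n,
            ((σ i • q i : Lp E p P) : Ω → E) ω = (As i).indicator (fun _ => σ i • xs i) ω := by
          rw [ae_all_iff]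
          intro i
          have heq : σ i • q i
              = indicatorConstLp p (hAs i) (measure_ne_top P (As i)) (σ i • xs i) :=
            (Stmt5Aux.smul_indicatorConstLp (σ i) (hAs i) (xs i)).symm
          rw [heq]
          exact indicatorConstLp_coeFn
        filter_upwards [Stmt5Aux.coeFn_finset_sum Finset.univ (fun i => σ i • q i), h2]
          with ω h1 h2
        rw [hY, h1]
        exact Finset.sum_congr rfl fun i _ => h2 i
      have hY2 : ∀ᵐ ω ∂P, ω ∉ A → Y ω = 0 := by
        filter_upwards [hYco] with ω h1 h2
        rw [h1]
        exact Stmt5Aux.sum_ind_of_not_mem _ (fun j hj => h2 (hsub j hj))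
      have hY1 : ‖Y‖ ≤ 1 := by
        have hnn : eLpNorm (⇑Y) p P ≤ 1 := by
          rw [eLpNorm_congr_ae hYco]
          have heq : eLpNorm (fun ω => ∑ i, (As i).indicator (fun _ => σ i • xs i) ω) p P
              = eLpNorm (fun ω => ∑ i, (As i).indicator (fun _ => xs i) ω) p P := by
            apply le_antisymm
            · exact eLpNorm_mono fun ω => le_of_eq (Stmt5Aux.norm_sum_ind_eq hd _ _
                (fun i => by rw [norm_smul, hσabs, one_mul]) ω)
            · exact eLpNorm_mono fun ω => le_of_eq (Stmt5Aux.norm_sum_ind_eq hd _ _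
                (fun i => by rw [norm_smul, hσabs, one_mul]) ω).symm
          rw [heq]
          exact hnorm
        rw [Lp.norm_def]
        calc (eLpNorm (⇑Y) p P).toReal ≤ (1 : ℝ≥0∞).toReal :=
              ENNReal.toReal_mono one_ne_top hnn
          _ = 1 := ENNReal.toReal_one
      have hLY : ‖L Y‖ = ∑ i, ‖L (q i)‖ := by
        have h1 : e (L Y) = ∑ i, ‖L (q i)‖ := by
          rw [hY, map_sum, map_sum]
          refine Finset.sum_congr rfl fun i _ => ?_
          rw [L.map_smul, e.map_smul, smul_eq_mul, hσval i]
        rw [← e.norm_map (L Y), h1, Real.norm_eq_abs,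
          abs_of_nonneg (Finset.sum_nonneg fun i _ => norm_nonneg _)]
      have hle : (‖L Y‖₊ : ℝ≥0∞) ≤ opNormOn P p L A := by
        unfold opNormOn
        exact le_iSup_of_le Y (le_iSup_of_le hY1 (le_iSup_of_le hY2 le_rfl))
      calc ∑ i, (‖L (q i)‖₊ : ℝ≥0∞) = ENNReal.ofReal (∑ i, ‖L (q i)‖) := by
            rw [ENNReal.ofReal_sum_of_nonneg (fun i _ => norm_nonneg _)]
            exact Finset.sum_congr rfl fun i _ => (ofReal_norm _).symm
        _ = (‖L Y‖₊ : ℝ≥0∞) := by rw [← hLY, ofReal_norm]; rfl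
        _ ≤ opNormOn P p L A := hle
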